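/- Decoupling of the Lax pair (Proposition 2.2, rational-function version). Let V be a complex vector space, let Γ_k(z) = Σ_{α∈Σ_k} Σ_{p=0}^{m_α−1} v^α_p (z−z_α)^{−(p+1)} (v^α_p ∈ V, k = 1,2), set Γ_γ(z) = Γ_1(z) + Γ_2(z − γ^{−1}), and fix coefficients ε_1, …, ε_M ∈ ℂ. Define ℒ_γ(z) = Γ_γ(z)/φ_γ(z) and ℳ_γ(z) = Σ_{i=1}^M (ε_i/φ_γ'(ζ_i(γ))) · Γ_γ(ζ_i(γ))/(z − ζ_i(γ)), and likewise ℒ^{(1)}(z) = Γ_1(z)/φ_1(z), ℳ^{(1)}(z) = Σ_{i=1}^{M_1} (ε_i/φ_1'(ζ^{(1)}_i)) Γ_1(ζ^{(1)}_i)/(z − ζ^{(1)}_i), ℒ^{(2)}(z) = Γ_2(z)/φ_2(z), ℳ^{(2)}(z) = Σ_{i=M_1+1}^{M} (ε_i/φ_2'(ζ^{(2)}_i)) Γ_2(ζ^{(2)}_i)/(z − ζ^{(2)}_i). Then for every z ∈ ℂ avoiding the poles of the limit functions: (ℒ_γ(z), ℳ_γ(z)) → (ℒ^{(1)}(z), ℳ^{(1)}(z))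 as γ → 0, and (ℒ_γ(z + γ^{−1}), ℳ_γ(z + γ^{−1})) → (ℒ^{(2)}(z), ℳ^{(2)}(z)) as γ → 0. -/

import Mathlib

open scoped BigOperators Topology
open Filter

/-- The partial-fraction part `χ(w)` of a twist function (site `a` has multiplicity `m a + 1`). -/
noncomputable def chiFun {n : ℕ} (z : Fin n → ℂ) (m : Fin n → ℕ)
    (l : Fin n → ℕ → ℂ) (w : ℂ) : ℂ :=
  ∑ a, ∑ p ∈ Finset.range (m a + 1), l a p / (w - z a) ^ (p + 1)

/-- A `V`-valued Gaudin Lax matrix `Γ(w) = Σ_α Σ_p v^α_p (w - z_α)^{-(p+1)}`. -/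
noncomputable def gamFun {n : ℕ} {V : Type*} [AddCommGroup V] [Module ℂ V]
    (z : Fin n → ℂ) (m : Fin n → ℕ) (v : Fin n → ℕ → V) (w : ℂ) : V :=
  ∑ a, ∑ p ∈ Finset.range (m a + 1), ((w - z a) ^ (p + 1))⁻¹ • v a p

noncomputable def chiDer {n : ℕ} (z : Fin n → ℂ) (m : Fin n → ℕ)
    (l : Fin n → ℕ → ℂ) (w : ℂ) : ℂ :=
  ∑ a, ∑ p ∈ Finset.range (m a + 1), (-(p + 1) : ℂ) * l a p / (w - z a) ^ (p + 2)

lemma hasDerivAt_chiFun {n : ℕ} (z : Fin n → ℂ) (m : Fin n → ℕ) (l : Fin n → ℕ → ℂ)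
    {w : ℂ} (hw : ∀ a, w ≠ z a) :
    HasDerivAt (chiFun z m l) (chiDer z m l w) w := by
  unfold chiFun chiDer
  refine HasDerivAt.fun_sum fun a _ => HasDerivAt.fun_sum fun p _ => ?_
  have hx : w - z a ≠ 0 := sub_ne_zero.2 (hw a)
  have h1 : HasDerivAt (fun w => w - z a) 1 w := (hasDerivAt_id w).sub_const _
  have h2 := (h1.pow (p + 1)).inv (pow_ne_zero _ hx)
  have h3 := h2.const_mul (l a p)
  simp only [div_eq_mul_inv]
  refine h3.congr_deriv ?_
  simp only [Pi.pow_apply]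
  have hxp : (w - z a) ^ (p + 2) ≠ 0 := pow_ne_zero _ hx
  rw [show p + 1 - 1 = p from rfl,
    show ((w - z a) ^ (p + 1)) ^ 2 = (w - z a) ^ p * (w - z a) ^ (p + 2) by
      rw [← pow_mul, ← pow_add]; congr 1; ring]
  have hxq : (w - z a) ^ p ≠ 0 := pow_ne_zero _ hx
  field_simp
  push_cast
  ring

section comp
variable {ι : Type*} {L : Filter ι} {F : ι → ℂ} {x : ℂ}

lemma tendsto_pow_inv_comp (hF : Tendsto F L (𝓝 x)) {c : ℂ} (hc : x ≠ c) (k : ℕ) :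
    Tendsto (fun t => ((F t - c) ^ k)⁻¹) L (𝓝 (((x - c) ^ k)⁻¹)) :=
  (((hF.sub_const c).pow k).inv₀ (pow_ne_zero _ (sub_ne_zero.2 hc)))

lemma tendsto_chiDer_comp {n : ℕ} (z : Fin n → ℂ) (m : Fin n → ℕ) (l : Fin n → ℕ → ℂ)
    (hF : Tendsto F L (𝓝 x)) (hx : ∀ a, x ≠ z a) :
    Tendsto (fun t => chiDer z m l (F t)) L (𝓝 (chiDer z m l x)) := by
  unfold chiDer
  refine tendsto_finset_sum _ fun a _ => tendsto_finset_sum _ fun p _ => ?_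
  simp only [div_eq_mul_inv]
  exact (tendsto_const_nhds.mul (tendsto_pow_inv_comp hF (hx a) (p + 2)))

lemma tendsto_gamFun_comp {n : ℕ} {V : Type*} [NormedAddCommGroup V] [NormedSpace ℂ V]
    (z : Fin n → ℂ) (m : Fin n → ℕ) (v : Fin n → ℕ → V)
    (hF : Tendsto F L (𝓝 x)) (hx : ∀ a, x ≠ z a) :
    Tendsto (fun t => gamFun z m v (F t)) L (𝓝 (gamFun z m v x)) := by
  unfold gamFun
  refine tendsto_finset_sum _ fun a _ => tendsto_finset_sum _ fun p _ => ?_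
  exact (tendsto_pow_inv_comp hF (hx a) (p + 1)).smul_const _

lemma tendsto_inv_zero_of_norm_atTop (hF : Tendsto (fun t => ‖F t‖) L atTop) :
    Tendsto (fun t => (F t)⁻¹) L (𝓝 0) := by
  rw [tendsto_iff_norm_sub_tendsto_zero]
  simpa [norm_inv, Function.comp_def] using tendsto_inv_atTop_zero.comp hF

lemma norm_sub_atTop (hF : Tendsto (fun t => ‖F t‖) L atTop) (c : ℂ) :
    Tendsto (fun t => ‖F t - c‖) L atTop := by
  refine tendsto_atTop_mono' L ?_ (tendsto_atTop_add_const_right _ (-‖c‖) hF)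
  filter_upwards with t
  have := norm_sub_norm_le (F t) c
  linarith

lemma tendsto_pow_inv_zero (hF : Tendsto (fun t => ‖F t‖) L atTop) (c : ℂ) (k : ℕ) :
    Tendsto (fun t => ((F t - c) ^ (k + 1))⁻¹) L (𝓝 0) := by
  have h1 : Tendsto (fun t => (F t - c)⁻¹) L (𝓝 0) :=
    tendsto_inv_zero_of_norm_atTop (by simpa using norm_sub_atTop hF c)
  have := (h1.pow (k + 1))
  simpa [inv_pow] using this

lemma tendsto_chiFun_zero {n : ℕ} (z : Fin n → ℂ) (m : Fin n → ℕ) (l : Fin n → ℕ → ℂ)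
    (hF : Tendsto (fun t => ‖F t‖) L atTop) :
    Tendsto (fun t => chiFun z m l (F t)) L (𝓝 0) := by
  unfold chiFun
  have : Tendsto (fun t => ∑ a : Fin n, ∑ p ∈ Finset.range (m a + 1),
      l a p / (F t - z a) ^ (p + 1)) L (𝓝 (∑ a : Fin n, ∑ p ∈ Finset.range (m a + 1), (0:ℂ))) := by
    refine tendsto_finset_sum _ fun a _ => tendsto_finset_sum _ fun p _ => ?_
    simp only [div_eq_mul_inv]
    simpa using tendsto_const_nhds.mul (tendsto_pow_inv_zero hF (z a) p)
  simpa using this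

lemma tendsto_chiDer_zero {n : ℕ} (z : Fin n → ℂ) (m : Fin n → ℕ) (l : Fin n → ℕ → ℂ)
    (hF : Tendsto (fun t => ‖F t‖) L atTop) :
    Tendsto (fun t => chiDer z m l (F t)) L (𝓝 0) := by
  unfold chiDer
  have : Tendsto (fun t => ∑ a : Fin n, ∑ p ∈ Finset.range (m a + 1),
      (-(p + 1) : ℂ) * l a p / (F t - z a) ^ (p + 2)) L
      (𝓝 (∑ a : Fin n, ∑ p ∈ Finset.range (m a + 1), (0:ℂ))) := by
    refine tendsto_finset_sum _ fun a _ => tendsto_finset_sum _ fun p _ => ?_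
    simp only [div_eq_mul_inv]
    simpa using tendsto_const_nhds.mul (tendsto_pow_inv_zero hF (z a) (p + 1))
  simpa using this

lemma tendsto_gamFun_zero {n : ℕ} {V : Type*} [NormedAddCommGroup V] [NormedSpace ℂ V]
    (z : Fin n → ℂ) (m : Fin n → ℕ) (v : Fin n → ℕ → V)
    (hF : Tendsto (fun t => ‖F t‖) L atTop) :
    Tendsto (fun t => gamFun z m v (F t)) L (𝓝 0) := by
  unfold gamFun
  have : Tendsto (fun t => ∑ a : Fin n, ∑ p ∈ Finset.range (m a + 1),
      ((F t - z a) ^ (p + 1))⁻¹ • v a p) L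
      (𝓝 (∑ a : Fin n, ∑ p ∈ Finset.range (m a + 1), (0:V))) := by
    refine tendsto_finset_sum _ fun a _ => tendsto_finset_sum _ fun p _ => ?_
    simpa using (tendsto_pow_inv_zero hF (z a) p).smul_const (v a p)
  simpa using this

lemma norm_atTop_add {f g : ι → ℂ} (hf : Tendsto (fun t => ‖f t‖) L atTop) {b : ℂ}
    (hg : Tendsto g L (𝓝 b)) : Tendsto (fun t => ‖f t + g t‖) L atTop := by
  have hgb : ∀ᶠ t in L, ‖g t‖ ≤ ‖b‖ + 1 := by
    have := (hg.norm).eventually_lt_const (lt_add_one ‖b‖)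
    filter_upwards [this] with t h using h.le
  refine tendsto_atTop_mono' L ?_ (tendsto_atTop_add_const_right _ (-(‖b‖ + 1)) hf)
  filter_upwards [hgb] with t h
  have h1 : ‖f t‖ ≤ ‖f t + g t‖ + ‖g t‖ := by
    calc ‖f t‖ = ‖f t + g t - g t‖ := by ring_nf
    _ ≤ ‖f t + g t‖ + ‖g t‖ := norm_sub_le _ _
  linarith

lemma ev_ne_of_norm_atTop (hF : Tendsto (fun t => ‖F t‖) L atTop) (c : ℂ) :
    ∀ᶠ t in L, F t ≠ c := by
  filter_upwards [hF.eventually_gt_atTop ‖c‖] with t h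
  intro he; rw [he] at h; exact lt_irrefl _ h

end comp


open Polynomial in
lemma phi_ne_zero {n M : ℕ} (z : Fin n → ℂ) (m : Fin n → ℕ) (l : Fin n → ℕ → ℂ)
    (linf : ℂ) (hlinf : linf ≠ 0) (hM : M = ∑ a, (m a + 1))
    (ζ : Fin M → ℂ) (hζinj : Function.Injective ζ)
    (hζp : ∀ i a, ζ i ≠ z a) (hζz : ∀ i, chiFun z m l (ζ i) - linf = 0)
    {w : ℂ} (hw1 : ∀ a, w ≠ z a) (hw2 : ∀ i, w ≠ ζ i) :
    chiFun z m l w - linf ≠ 0 := by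
  classical
  set Q : ℂ[X] := ∏ a, (X - C (z a)) ^ (m a + 1) with hQ
  set S : ℂ[X] := ∑ a, ∑ p ∈ Finset.range (m a + 1),
      C (l a p) * ((X - C (z a)) ^ (m a - p) *
        ∏ b ∈ Finset.univ.erase a, (X - C (z b)) ^ (m b + 1)) with hS
  set P : ℂ[X] := S - C linf * Q with hP
  have heval : ∀ u : ℂ, (∀ a, u ≠ z a) →
      P.eval u = (chiFun z m l u - linf) * Q.eval u := by
    intro u hu
    simp only [hP, hS, hQ, eval_sub, eval_mul, eval_C, eval_finset_sum, eval_pow,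
      eval_prod, eval_X]
    rw [sub_mul, chiFun, Finset.sum_mul]
    congr 1
    refine Finset.sum_congr rfl fun a _ => ?_
    rw [Finset.sum_mul]
    refine Finset.sum_congr rfl fun p hp => ?_
    have hx : u - z a ≠ 0 := sub_ne_zero.2 (hu a)
    have hprod : ∏ a', (u - z a') ^ (m a' + 1) =
        (u - z a) ^ (m a + 1) * ∏ b ∈ Finset.univ.erase a, (u - z b) ^ (m b + 1) :=
      (Finset.mul_prod_erase _ _ (Finset.mem_univ a)).symm
    rw [hprod, div_mul_eq_mul_div, eq_div_iff (pow_ne_zero _ hx)]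
    have hpe : (u - z a) ^ (m a - p) * (u - z a) ^ (p + 1) = (u - z a) ^ (m a + 1) := by
      rw [← pow_add]; congr 1
      have : p < m a + 1 := Finset.mem_range.1 hp
      omega
    calc l a p * ((u - z a) ^ (m a - p) * ∏ b ∈ Finset.univ.erase a, (u - z b) ^ (m b + 1))
          * (u - z a) ^ (p + 1)
        = l a p * (((u - z a) ^ (m a - p) * (u - z a) ^ (p + 1))
            * ∏ b ∈ Finset.univ.erase a, (u - z b) ^ (m b + 1)) := by ring
      _ = _ := by rw [hpe]
  have hroot : ∀ i, P.IsRoot (ζ i) := fun i => by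
    rw [IsRoot, heval _ (hζp i), hζz i, zero_mul]
  have hQmonic : Q.Monic := monic_prod_of_monic _ _ fun a _ => (monic_X_sub_C _).pow _
  have hQdeg : Q.natDegree = M := by
    rw [hM, hQ, natDegree_prod _ _ fun a _ => ((monic_X_sub_C (z a)).pow _).ne_zero]
    simp [natDegree_pow]
  have hSdeg : ∀ a, ∀ p ∈ Finset.range (m a + 1),
      (C (l a p) * ((X - C (z a)) ^ (m a - p) *
        ∏ b ∈ Finset.univ.erase a, (X - C (z b)) ^ (m b + 1))).natDegree < M := by
    intro a p hp
    have h1 : (∏ b ∈ Finset.univ.erase a, (X - C (z b)) ^ (m b + 1)).natDegree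
        = ∑ b ∈ Finset.univ.erase a, (m b + 1) := by
      rw [natDegree_prod _ _ fun b _ => ((monic_X_sub_C (z b)).pow _).ne_zero]
      simp [natDegree_pow]
    have h2 : M = (m a + 1) + ∑ b ∈ Finset.univ.erase a, (m b + 1) := by
      rw [hM, ← Finset.add_sum_erase _ _ (Finset.mem_univ a)]
    calc (C (l a p) * ((X - C (z a)) ^ (m a - p) *
          ∏ b ∈ Finset.univ.erase a, (X - C (z b)) ^ (m b + 1))).natDegree
        ≤ (C (l a p)).natDegree + ((X - C (z a)) ^ (m a - p) *
          ∏ b ∈ Finset.univ.erase a, (X - C (z b)) ^ (m b + 1)).natDegree :=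
          natDegree_mul_le
      _ ≤ (C (l a p)).natDegree + (((X - C (z a)) ^ (m a - p)).natDegree +
          (∏ b ∈ Finset.univ.erase a, (X - C (z b)) ^ (m b + 1)).natDegree) := by
          exact Nat.add_le_add_left natDegree_mul_le _
      _ ≤ 0 + ((m a - p) + ∑ b ∈ Finset.univ.erase a, (m b + 1)) := by
          rw [natDegree_C, h1, natDegree_pow, natDegree_X_sub_C, mul_one]
      _ < M := by rw [h2]; omega
  have hScoeff : S.coeff M = 0 := by
    rw [hS, finset_sum_coeff]
    refine Finset.sum_eq_zero fun a _ => ?_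
    rw [finset_sum_coeff]
    exact Finset.sum_eq_zero fun p hp =>
      coeff_eq_zero_of_natDegree_lt (hSdeg a p hp)
  have hQcoeff : Q.coeff M = 1 := by rw [← hQdeg]; exact hQmonic.coeff_natDegree
  have hPcoeff : P.coeff M = -linf := by
    rw [hP, coeff_sub, hScoeff, coeff_C_mul, hQcoeff, mul_one, zero_sub]
  have hPne : P ≠ 0 := by
    intro h; rw [h, coeff_zero] at hPcoeff
    exact hlinf (by simpa using hPcoeff.symm)
  have hPdegle : P.natDegree ≤ M := by
    refine le_trans (natDegree_sub_le _ _) (max_le ?_ ?_)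
    · exact natDegree_sum_le_of_forall_le _ _ fun a _ =>
        natDegree_sum_le_of_forall_le _ _ fun p hp => (hSdeg a p hp).le
    · calc (C linf * Q).natDegree ≤ (C linf).natDegree + Q.natDegree := natDegree_mul_le
        _ ≤ M := by rw [natDegree_C, hQdeg, zero_add]
  have hPdeg : P.natDegree = M :=
    le_antisymm hPdegle (le_natDegree_of_ne_zero (by rw [hPcoeff]; simpa using hlinf))
  set s : Multiset ℂ := Multiset.map ζ Finset.univ.val with hs
  have hnodup : s.Nodup := (Finset.univ.nodup).map hζinj
  have hle : s ≤ P.roots := by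
    rw [Multiset.le_iff_subset hnodup]
    intro x hx
    obtain ⟨i, _, rfl⟩ := Multiset.mem_map.1 hx
    exact mem_roots'.2 ⟨hPne, hroot i⟩
  have heqr : s = P.roots :=
    Multiset.eq_of_le_of_card_le hle (by
      rw [show Multiset.card s = M by simp [hs]]
      exact le_trans (card_roots' P) (le_of_eq hPdeg))
  intro h0
  have hev : P.eval w = 0 := by rw [heval w hw1, h0, zero_mul]
  have hw : w ∈ P.roots := mem_roots'.2 ⟨hPne, hev⟩
  rw [← heqr] at hw
  obtain ⟨i, _, hwi⟩ := Multiset.mem_map.1 hw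
  exact hw2 i hwi.symm


/-- **Decoupling of the Lax pair** (Proposition 2.2, rational-function version).
With `ℒ_γ(z) = Γ_γ(z)/φ_γ(z)` and
`ℳ_γ(z) = Σ_i (ε_i/φ_γ'(ζ_i(γ))) Γ_γ(ζ_i(γ))/(z - ζ_i(γ))`, one has
`(ℒ_γ(z), ℳ_γ(z)) → (ℒ⁽¹⁾(z), ℳ⁽¹⁾(z))` and
`(ℒ_γ(z + γ⁻¹), ℳ_γ(z + γ⁻¹)) → (ℒ⁽²⁾(z), ℳ⁽²⁾(z))` as γ → 0, for every `z` avoiding the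
poles of the limit functions. -/
theorem decoupling_of_Lax_pair
    {n₁ n₂ M₁ M₂ : ℕ} {V : Type*} [NormedAddCommGroup V] [NormedSpace ℂ V]
    (z1 : Fin n₁ → ℂ) (m1 : Fin n₁ → ℕ) (l1 : Fin n₁ → ℕ → ℂ)
    (z2 : Fin n₂ → ℂ) (m2 : Fin n₂ → ℕ) (l2 : Fin n₂ → ℕ → ℂ)
    (linf : ℂ) (hlinf : linf ≠ 0)
    (hz1 : Function.Injective z1) (hz2 : Function.Injective z2)
    (hl1 : ∀ a, l1 a (m1 a) ≠ 0) (hl2 : ∀ a, l2 a (m2 a) ≠ 0)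
    (hM1 : M₁ = ∑ a, (m1 a + 1)) (hM2 : M₂ = ∑ a, (m2 a + 1))
    (ζ1 : Fin M₁ → ℂ) (ζ2 : Fin M₂ → ℂ)
    (hζ1inj : Function.Injective ζ1) (hζ2inj : Function.Injective ζ2)
    (hζ1p : ∀ i a, ζ1 i ≠ z1 a) (hζ2p : ∀ j a, ζ2 j ≠ z2 a)
    (hζ1z : ∀ i, chiFun z1 m1 l1 (ζ1 i) - linf = 0)
    (hζ2z : ∀ j, chiFun z2 m2 l2 (ζ2 j) - linf = 0)
    (hζ1s : ∀ i, deriv (fun w => chiFun z1 m1 l1 w - linf) (ζ1 i) ≠ 0)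
    (hζ2s : ∀ j, deriv (fun w => chiFun z2 m2 l2 w - linf) (ζ2 j) ≠ 0)
    (v1 : Fin n₁ → ℕ → V) (v2 : Fin n₂ → ℕ → V)
    (eps : Fin M₁ ⊕ Fin M₂ → ℂ)
    -- the zeros `ζ i γ` of the coupled twist function provided by the decoupling lemma
    (ε C : ℝ) (hε : 0 < ε) (hC : 0 < C)
    (ζ : Fin M₁ ⊕ Fin M₂ → ℝ → ℂ)
    (hζ : ∀ γ : ℝ, 0 < |γ| → |γ| < ε →
      (Function.Injective fun i => ζ i γ) ∧
      (∀ i, chiFun z1 m1 l1 (ζ i γ) + chiFun z2 m2 l2 (ζ i γ - (γ : ℂ)⁻¹) - linf = 0 ∧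
        deriv (fun w => chiFun z1 m1 l1 w + chiFun z2 m2 l2 (w - (γ : ℂ)⁻¹) - linf)
          (ζ i γ) ≠ 0) ∧
      (∀ i : Fin M₁, ‖ζ (Sum.inl i) γ - ζ1 i‖ ≤ C * |γ|) ∧
      (∀ j : Fin M₂, ‖ζ (Sum.inr j) γ - (γ : ℂ)⁻¹ - ζ2 j‖ ≤ C * |γ|)) :
    -- first decoupling limit: `(ℒ_γ(z), ℳ_γ(z)) → (ℒ⁽¹⁾(z), ℳ⁽¹⁾(z))`
    (∀ z : ℂ, (∀ a, z ≠ z1 a) → (∀ i, z ≠ ζ1 i) →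
      Tendsto
        (fun γ : ℝ =>
          (chiFun z1 m1 l1 z + chiFun z2 m2 l2 (z - (γ : ℂ)⁻¹) - linf)⁻¹ •
            (gamFun z1 m1 v1 z + gamFun z2 m2 v2 (z - (γ : ℂ)⁻¹)))
        (𝓝[≠] (0 : ℝ))
        (𝓝 ((chiFun z1 m1 l1 z - linf)⁻¹ • gamFun z1 m1 v1 z)) ∧
      Tendsto
        (fun γ : ℝ =>
          ∑ i : Fin M₁ ⊕ Fin M₂,
            ((eps i / deriv
                (fun w => chiFun z1 m1 l1 w + chiFun z2 m2 l2 (w - (γ : ℂ)⁻¹) - linf)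
                (ζ i γ)) * (z - ζ i γ)⁻¹) •
              (gamFun z1 m1 v1 (ζ i γ) + gamFun z2 m2 v2 (ζ i γ - (γ : ℂ)⁻¹)))
        (𝓝[≠] (0 : ℝ))
        (𝓝 (∑ i : Fin M₁,
          ((eps (Sum.inl i) / deriv (fun w => chiFun z1 m1 l1 w - linf) (ζ1 i)) *
            (z - ζ1 i)⁻¹) • gamFun z1 m1 v1 (ζ1 i)))) ∧
    -- second decoupling limit: `(ℒ_γ(z + γ⁻¹), ℳ_γ(z + γ⁻¹)) → (ℒ⁽²⁾(z), ℳ⁽²⁾(z))`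
    (∀ z : ℂ, (∀ a, z ≠ z2 a) → (∀ j, z ≠ ζ2 j) →
      Tendsto
        (fun γ : ℝ =>
          (chiFun z1 m1 l1 (z + (γ : ℂ)⁻¹)
              + chiFun z2 m2 l2 (z + (γ : ℂ)⁻¹ - (γ : ℂ)⁻¹) - linf)⁻¹ •
            (gamFun z1 m1 v1 (z + (γ : ℂ)⁻¹)
              + gamFun z2 m2 v2 (z + (γ : ℂ)⁻¹ - (γ : ℂ)⁻¹)))
        (𝓝[≠] (0 : ℝ))
        (𝓝 ((chiFun z2 m2 l2 z - linf)⁻¹ • gamFun z2 m2 v2 z)) ∧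
      Tendsto
        (fun γ : ℝ =>
          ∑ i : Fin M₁ ⊕ Fin M₂,
            ((eps i / deriv
                (fun w => chiFun z1 m1 l1 w + chiFun z2 m2 l2 (w - (γ : ℂ)⁻¹) - linf)
                (ζ i γ)) * (z + (γ : ℂ)⁻¹ - ζ i γ)⁻¹) •
              (gamFun z1 m1 v1 (ζ i γ) + gamFun z2 m2 v2 (ζ i γ - (γ : ℂ)⁻¹)))
        (𝓝[≠] (0 : ℝ))
        (𝓝 (∑ j : Fin M₂,
          ((eps (Sum.inr j) / deriv (fun w => chiFun z2 m2 l2 w - linf) (ζ2 j)) *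
            (z - ζ2 j)⁻¹) • gamFun z2 m2 v2 (ζ2 j)))) := by
  set L := 𝓝[≠] (0:ℝ) with hLdef
  have hEv : ∀ᶠ γ : ℝ in L, 0 < |γ| ∧ |γ| < ε := by
    have h1 : ∀ᶠ γ : ℝ in L, |γ| < ε := by
      have habs : Tendsto (fun γ : ℝ => |γ|) L (𝓝 0) :=
        (continuous_abs.tendsto' 0 0 abs_zero).mono_left nhdsWithin_le_nhds
      exact habs.eventually_lt_const hε
    filter_upwards [h1, self_mem_nhdsWithin] with γ hγ1 hγ2
    exact ⟨abs_pos.2 (by simpa using hγ2), hγ1⟩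
  have habs0 : Tendsto (fun γ : ℝ => |γ|) L (𝓝 0) :=
    (continuous_abs.tendsto' 0 0 abs_zero).mono_left nhdsWithin_le_nhds
  have habsIoi : Tendsto (fun γ : ℝ => |γ|) L (𝓝[>] (0:ℝ)) := by
    rw [tendsto_nhdsWithin_iff]
    exact ⟨habs0, hEv.mono fun γ h => h.1⟩
  have hcinf : Tendsto (fun γ : ℝ => ‖((γ:ℂ))⁻¹‖) L atTop := by
    have h := tendsto_inv_nhdsGT_zero.comp habsIoi
    refine h.congr fun γ : ℝ => ?_
    simp [Function.comp]
  have hnegcinf : Tendsto (fun γ : ℝ => ‖-((γ:ℂ))⁻¹‖) L atTop := by simpa using hcinf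
  have key : ∀ (g : ℝ → ℂ) (b : ℂ), Tendsto g L (𝓝 b) →
      Tendsto (fun γ : ℝ => ‖g γ - ((γ:ℂ))⁻¹‖) L atTop := by
    intro g b hg
    have h := norm_atTop_add hnegcinf hg
    refine h.congr fun γ : ℝ => ?_
    rw [neg_add_eq_sub]
  have key' : ∀ (g : ℝ → ℂ) (b : ℂ), Tendsto g L (𝓝 b) →
      Tendsto (fun γ : ℝ => ‖g γ + ((γ:ℂ))⁻¹‖) L atTop := by
    intro g b hg
    have h := norm_atTop_add hcinf hg
    refine h.congr fun γ : ℝ => ?_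
    rw [add_comm]
  have hCabs : Tendsto (fun γ : ℝ => C * |γ|) L (𝓝 0) := by
    simpa using habs0.const_mul C
  have hA : ∀ i : Fin M₁, Tendsto (fun γ : ℝ => ζ (Sum.inl i) γ) L (𝓝 (ζ1 i)) := by
    intro i
    rw [tendsto_iff_norm_sub_tendsto_zero]
    refine squeeze_zero' (Eventually.of_forall fun γ : ℝ => norm_nonneg _) ?_ hCabs
    filter_upwards [hEv] with γ hγ
    exact (hζ γ hγ.1 hγ.2).2.2.1 i
  have hB : ∀ j : Fin M₂, Tendsto (fun γ : ℝ => ζ (Sum.inr j) γ - ((γ:ℂ))⁻¹) L (𝓝 (ζ2 j)) := by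
    intro j
    rw [tendsto_iff_norm_sub_tendsto_zero]
    refine squeeze_zero' (Eventually.of_forall fun γ : ℝ => norm_nonneg _) ?_ hCabs
    filter_upwards [hEv] with γ hγ
    exact (hζ γ hγ.1 hγ.2).2.2.2 j
  have hAinf : ∀ i : Fin M₁, Tendsto (fun γ : ℝ => ‖ζ (Sum.inl i) γ - ((γ:ℂ))⁻¹‖) L atTop :=
    fun i => key _ _ (hA i)
  have hBinf : ∀ j : Fin M₂, Tendsto (fun γ : ℝ => ‖ζ (Sum.inr j) γ‖) L atTop := by
    intro j
    have h := key' (fun γ : ℝ => ζ (Sum.inr j) γ - ((γ:ℂ))⁻¹) (ζ2 j) (hB j)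
    refine h.congr fun γ : ℝ => ?_
    rw [sub_add_cancel]
  have hne_of_tendsto : ∀ {k : ℕ} (zs : Fin k → ℂ) (F : ℝ → ℂ) (x : ℂ),
      Tendsto F L (𝓝 x) → (∀ a, x ≠ zs a) → ∀ᶠ γ : ℝ in L, ∀ a, F γ ≠ zs a :=
    fun zs F x hF hx => eventually_all.2 fun a => hF.eventually_ne (hx a)
  have hne_of_atTop : ∀ {k : ℕ} (zs : Fin k → ℂ) (F : ℝ → ℂ),
      Tendsto (fun γ : ℝ => ‖F γ‖) L atTop → ∀ᶠ γ : ℝ in L, ∀ a, F γ ≠ zs a :=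
    fun zs F hF => eventually_all.2 fun a => ev_ne_of_norm_atTop hF (zs a)
  have hDERIV : ∀ (F : ℝ → ℂ), (∀ᶠ γ : ℝ in L, ∀ a, F γ ≠ z1 a) →
      (∀ᶠ γ : ℝ in L, ∀ a, F γ - ((γ:ℂ))⁻¹ ≠ z2 a) →
      ∀ᶠ γ : ℝ in L, deriv (fun w => chiFun z1 m1 l1 w + chiFun z2 m2 l2 (w - ((γ:ℂ))⁻¹) - linf)
          (F γ)
        = chiDer z1 m1 l1 (F γ) + chiDer z2 m2 l2 (F γ - ((γ:ℂ))⁻¹) := by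
    intro F h1 h2
    filter_upwards [h1, h2] with γ hγ1 hγ2
    have hd1 := hasDerivAt_chiFun z1 m1 l1 hγ1
    have hd2 : HasDerivAt (fun w => chiFun z2 m2 l2 (w - ((γ:ℂ))⁻¹))
        (chiDer z2 m2 l2 (F γ - ((γ:ℂ))⁻¹)) (F γ) := by
      have h := (hasDerivAt_chiFun z2 m2 l2 hγ2).comp (F γ)
        ((hasDerivAt_id (F γ)).sub_const ((γ:ℂ))⁻¹)
      simpa [Function.comp_def] using h
    exact ((hd1.add hd2).sub_const linf).deriv
  have hded1 : ∀ i : Fin M₁,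
      deriv (fun w => chiFun z1 m1 l1 w - linf) (ζ1 i) = chiDer z1 m1 l1 (ζ1 i) :=
    fun i => ((hasDerivAt_chiFun z1 m1 l1 (hζ1p i)).sub_const linf).deriv
  have hded2 : ∀ j : Fin M₂,
      deriv (fun w => chiFun z2 m2 l2 w - linf) (ζ2 j) = chiDer z2 m2 l2 (ζ2 j) :=
    fun j => ((hasDerivAt_chiFun z2 m2 l2 (hζ2p j)).sub_const linf).deriv
  have hd1ne : ∀ i : Fin M₁, chiDer z1 m1 l1 (ζ1 i) ≠ 0 := fun i => by
    rw [← hded1 i]; exact hζ1s i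
  have hd2ne : ∀ j : Fin M₂, chiDer z2 m2 l2 (ζ2 j) ≠ 0 := fun j => by
    rw [← hded2 j]; exact hζ2s j
  -- the derivative of the coupled twist function along the zeros, inl case
  have hD1 : ∀ i : Fin M₁, Tendsto (fun γ : ℝ =>
      deriv (fun w => chiFun z1 m1 l1 w + chiFun z2 m2 l2 (w - ((γ:ℂ))⁻¹) - linf)
        (ζ (Sum.inl i) γ)) L (𝓝 (chiDer z1 m1 l1 (ζ1 i))) := by
    intro i
    have hev1 := hne_of_tendsto z1 _ _ (hA i) (hζ1p i)
    have hev2 := hne_of_atTop z2 _ (hAinf i)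
    refine Tendsto.congr' ((hDERIV _ hev1 hev2).mono fun γ h => h.symm) ?_
    have t1 := tendsto_chiDer_comp z1 m1 l1 (hA i) (hζ1p i)
    have t2 := tendsto_chiDer_zero z2 m2 l2 (hAinf i)
    simpa using t1.add t2
  have hD2 : ∀ j : Fin M₂, Tendsto (fun γ : ℝ =>
      deriv (fun w => chiFun z1 m1 l1 w + chiFun z2 m2 l2 (w - ((γ:ℂ))⁻¹) - linf)
        (ζ (Sum.inr j) γ)) L (𝓝 (chiDer z2 m2 l2 (ζ2 j))) := by
    intro j
    have hev1 := hne_of_atTop z1 _ (hBinf j)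
    have hev2 := hne_of_tendsto z2 _ _ (hB j) (hζ2p j)
    refine Tendsto.congr' ((hDERIV _ hev1 hev2).mono fun γ h => h.symm) ?_
    have t1 := tendsto_chiDer_zero z1 m1 l1 (hBinf j)
    have t2 := tendsto_chiDer_comp z2 m2 l2 (hB j) (hζ2p j)
    simpa using t1.add t2
  -- Gamma along the zeros
  have hG1 : ∀ i : Fin M₁, Tendsto (fun γ : ℝ =>
      gamFun z1 m1 v1 (ζ (Sum.inl i) γ) + gamFun z2 m2 v2 (ζ (Sum.inl i) γ - ((γ:ℂ))⁻¹))
      L (𝓝 (gamFun z1 m1 v1 (ζ1 i))) := by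
    intro i
    have t1 := tendsto_gamFun_comp z1 m1 v1 (hA i) (hζ1p i)
    have t2 := tendsto_gamFun_zero z2 m2 v2 (hAinf i)
    simpa using t1.add t2
  have hG2 : ∀ j : Fin M₂, Tendsto (fun γ : ℝ =>
      gamFun z1 m1 v1 (ζ (Sum.inr j) γ) + gamFun z2 m2 v2 (ζ (Sum.inr j) γ - ((γ:ℂ))⁻¹))
      L (𝓝 (gamFun z2 m2 v2 (ζ2 j))) := by
    intro j
    have t1 := tendsto_gamFun_zero z1 m1 v1 (hBinf j)
    have t2 := tendsto_gamFun_comp z2 m2 v2 (hB j) (hζ2p j)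
    simpa using t1.add t2
  constructor
  · intro z hz1p hz1ζ
    have hphi1 : chiFun z1 m1 l1 z - linf ≠ 0 :=
      phi_ne_zero z1 m1 l1 linf hlinf hM1 ζ1 hζ1inj hζ1p hζ1z hz1p hz1ζ
    constructor
    · -- ℒ limit 1
      have hsinf := key (fun _ => z) z tendsto_const_nhds
      have hs : Tendsto (fun γ : ℝ =>
          chiFun z1 m1 l1 z + chiFun z2 m2 l2 (z - ((γ:ℂ))⁻¹) - linf)
          L (𝓝 (chiFun z1 m1 l1 z - linf)) := by
        have h2 := tendsto_chiFun_zero z2 m2 l2 hsinf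
        simpa using (tendsto_const_nhds.add h2).sub_const linf
      have hg : Tendsto (fun γ : ℝ =>
          gamFun z1 m1 v1 z + gamFun z2 m2 v2 (z - ((γ:ℂ))⁻¹)) L (𝓝 (gamFun z1 m1 v1 z)) := by
        simpa using tendsto_const_nhds.add (tendsto_gamFun_zero z2 m2 v2 hsinf)
      exact (hs.inv₀ hphi1).smul hg
    · -- ℳ limit 1
      simp only [Fintype.sum_sum_type]
      have h1 : Tendsto (fun γ : ℝ => ∑ i : Fin M₁,
          ((eps (Sum.inl i) / deriv
              (fun w => chiFun z1 m1 l1 w + chiFun z2 m2 l2 (w - ((γ:ℂ))⁻¹) - linf)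
              (ζ (Sum.inl i) γ)) * (z - ζ (Sum.inl i) γ)⁻¹) •
            (gamFun z1 m1 v1 (ζ (Sum.inl i) γ)
              + gamFun z2 m2 v2 (ζ (Sum.inl i) γ - ((γ:ℂ))⁻¹)))
          L (𝓝 (∑ i : Fin M₁,
            ((eps (Sum.inl i) / deriv (fun w => chiFun z1 m1 l1 w - linf) (ζ1 i)) *
              (z - ζ1 i)⁻¹) • gamFun z1 m1 v1 (ζ1 i))) := by
        refine tendsto_finset_sum _ fun i _ => ?_
        rw [hded1 i]
        exact (((tendsto_const_nhds.div (hD1 i) (hd1ne i)).mul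
          ((tendsto_const_nhds.sub (hA i)).inv₀ (sub_ne_zero.2 (hz1ζ i)))).smul (hG1 i))
      have h2 : Tendsto (fun γ : ℝ => ∑ j : Fin M₂,
          ((eps (Sum.inr j) / deriv
              (fun w => chiFun z1 m1 l1 w + chiFun z2 m2 l2 (w - ((γ:ℂ))⁻¹) - linf)
              (ζ (Sum.inr j) γ)) * (z - ζ (Sum.inr j) γ)⁻¹) •
            (gamFun z1 m1 v1 (ζ (Sum.inr j) γ)
              + gamFun z2 m2 v2 (ζ (Sum.inr j) γ - ((γ:ℂ))⁻¹)))
          L (𝓝 0) := by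
        rw [show (0:V) = ∑ _j : Fin M₂, (0:V) by simp]
        refine tendsto_finset_sum _ fun j _ => ?_
        have hinv : Tendsto (fun γ : ℝ => (z - ζ (Sum.inr j) γ)⁻¹) L (𝓝 0) := by
          refine tendsto_inv_zero_of_norm_atTop ?_
          have h := key (fun γ : ℝ => z - (ζ (Sum.inr j) γ - ((γ:ℂ))⁻¹)) (z - ζ2 j)
            (tendsto_const_nhds.sub (hB j))
          refine h.congr fun γ : ℝ => ?_
          congr 1; ring
        have h : Tendsto (fun γ : ℝ =>
            ((eps (Sum.inr j) / deriv
                (fun w => chiFun z1 m1 l1 w + chiFun z2 m2 l2 (w - ((γ:ℂ))⁻¹) - linf)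
                (ζ (Sum.inr j) γ)) * (z - ζ (Sum.inr j) γ)⁻¹) •
              (gamFun z1 m1 v1 (ζ (Sum.inr j) γ)
                + gamFun z2 m2 v2 (ζ (Sum.inr j) γ - ((γ:ℂ))⁻¹))) L
            (𝓝 (((eps (Sum.inr j) / chiDer z2 m2 l2 (ζ2 j)) * 0) • gamFun z2 m2 v2 (ζ2 j))) :=
          ((tendsto_const_nhds.div (hD2 j) (hd2ne j)).mul hinv).smul (hG2 j)
        simpa using h
      have h := h1.add h2
      rw [add_zero] at h
      exact h
  · intro z hz2p hz2ζ
    have hphi2 : chiFun z2 m2 l2 z - linf ≠ 0 :=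
      phi_ne_zero z2 m2 l2 linf hlinf hM2 ζ2 hζ2inj hζ2p hζ2z hz2p hz2ζ
    constructor
    · -- ℒ limit 2
      simp only [add_sub_cancel_right]
      have hsinf := key' (fun _ : ℝ => z) z tendsto_const_nhds
      have hs : Tendsto (fun γ : ℝ =>
          chiFun z1 m1 l1 (z + ((γ:ℂ))⁻¹) + chiFun z2 m2 l2 z - linf)
          L (𝓝 (chiFun z2 m2 l2 z - linf)) := by
        have h1 := tendsto_chiFun_zero z1 m1 l1 hsinf
        simpa using (h1.add tendsto_const_nhds).sub_const linf
      have hg : Tendsto (fun γ : ℝ =>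
          gamFun z1 m1 v1 (z + ((γ:ℂ))⁻¹) + gamFun z2 m2 v2 z) L (𝓝 (gamFun z2 m2 v2 z)) := by
        simpa using (tendsto_gamFun_zero z1 m1 v1 hsinf).add tendsto_const_nhds
      exact (hs.inv₀ hphi2).smul hg
    · -- ℳ limit 2
      simp only [Fintype.sum_sum_type]
      have h1 : Tendsto (fun γ : ℝ => ∑ i : Fin M₁,
          ((eps (Sum.inl i) / deriv
              (fun w => chiFun z1 m1 l1 w + chiFun z2 m2 l2 (w - ((γ:ℂ))⁻¹) - linf)
              (ζ (Sum.inl i) γ)) * (z + ((γ:ℂ))⁻¹ - ζ (Sum.inl i) γ)⁻¹) •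
            (gamFun z1 m1 v1 (ζ (Sum.inl i) γ)
              + gamFun z2 m2 v2 (ζ (Sum.inl i) γ - ((γ:ℂ))⁻¹)))
          L (𝓝 0) := by
        rw [show (0:V) = ∑ _i : Fin M₁, (0:V) by simp]
        refine tendsto_finset_sum _ fun i _ => ?_
        have hinv : Tendsto (fun γ : ℝ => (z + ((γ:ℂ))⁻¹ - ζ (Sum.inl i) γ)⁻¹) L (𝓝 0) := by
          refine tendsto_inv_zero_of_norm_atTop ?_
          have h := key' (fun γ : ℝ => z - ζ (Sum.inl i) γ) (z - ζ1 i)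
            (tendsto_const_nhds.sub (hA i))
          refine h.congr fun γ : ℝ => ?_
          congr 1; ring
        have h : Tendsto (fun γ : ℝ =>
            ((eps (Sum.inl i) / deriv
                (fun w => chiFun z1 m1 l1 w + chiFun z2 m2 l2 (w - ((γ:ℂ))⁻¹) - linf)
                (ζ (Sum.inl i) γ)) * (z + ((γ:ℂ))⁻¹ - ζ (Sum.inl i) γ)⁻¹) •
              (gamFun z1 m1 v1 (ζ (Sum.inl i) γ)
                + gamFun z2 m2 v2 (ζ (Sum.inl i) γ - ((γ:ℂ))⁻¹))) L
            (𝓝 (((eps (Sum.inl i) / chiDer z1 m1 l1 (ζ1 i)) * 0) • gamFun z1 m1 v1 (ζ1 i))) :=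
          ((tendsto_const_nhds.div (hD1 i) (hd1ne i)).mul hinv).smul (hG1 i)
        simpa using h
      have h2 : Tendsto (fun γ : ℝ => ∑ j : Fin M₂,
          ((eps (Sum.inr j) / deriv
              (fun w => chiFun z1 m1 l1 w + chiFun z2 m2 l2 (w - ((γ:ℂ))⁻¹) - linf)
              (ζ (Sum.inr j) γ)) * (z + ((γ:ℂ))⁻¹ - ζ (Sum.inr j) γ)⁻¹) •
            (gamFun z1 m1 v1 (ζ (Sum.inr j) γ)
              + gamFun z2 m2 v2 (ζ (Sum.inr j) γ - ((γ:ℂ))⁻¹)))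
          L (𝓝 (∑ j : Fin M₂,
            ((eps (Sum.inr j) / deriv (fun w => chiFun z2 m2 l2 w - linf) (ζ2 j)) *
              (z - ζ2 j)⁻¹) • gamFun z2 m2 v2 (ζ2 j))) := by
        refine tendsto_finset_sum _ fun j _ => ?_
        rw [hded2 j]
        have hinv : Tendsto (fun γ : ℝ => (z + ((γ:ℂ))⁻¹ - ζ (Sum.inr j) γ)⁻¹) L
            (𝓝 ((z - ζ2 j)⁻¹)) := by
          have hbase : Tendsto (fun γ : ℝ => z - (ζ (Sum.inr j) γ - ((γ:ℂ))⁻¹)) L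
              (𝓝 (z - ζ2 j)) := tendsto_const_nhds.sub (hB j)
          have h := hbase.inv₀ (sub_ne_zero.2 (hz2ζ j))
          refine h.congr fun γ : ℝ => ?_
          congr 1; ring
        exact (((tendsto_const_nhds.div (hD2 j) (hd2ne j)).mul hinv).smul (hG2 j))
      have h := h1.add h2
      rw [zero_add] at h
      exact h
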